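/- Let f : ℝ^n → ℝ be differentiable with L-Lipschitz gradient, let c ∈ (0,1), α > 0, κ₁ > 0, κ₂ > 0, and let x, s, g ∈ ℝ^n and t > 0 satisfy: ‖∇f(x) − g‖ ≤ α t ‖g‖, κ₂ ‖g‖ ≤ ‖s‖ ≤ κ₁ ‖g‖, and −g^T s ≥ (1/κ₁) ‖s‖². If t ≤ 2(1−c)κ₂ / ((κ₂ L + 2α) κ₁), then the Armijo condition f(x + t s) ≤ f(x) + c t s^T g holds. -/

import Mathlib

open scoped RealInnerProductSpace

private lemma grad_apply {n : ℕ} (f : EuclideanSpace ℝ (Fin n) → ℝ) (y v : EuclideanSpace ℝ (Fin n)) :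
    ⟪gradient f y, v⟫ = fderiv ℝ f y v := by
  rw [gradient, InnerProductSpace.toDual_symm_apply]

private lemma descent_lemma {n : ℕ} (f : EuclideanSpace ℝ (Fin n) → ℝ)
    (hf : Differentiable ℝ f) (L : ℝ)
    (hL : ∀ x y, ‖gradient f x - gradient f y‖ ≤ L * ‖x - y‖)
    (x v : EuclideanSpace ℝ (Fin n)) :
    f (x + v) ≤ f x + ⟪gradient f x, v⟫ + L / 2 * ‖v‖ ^ 2 := by
  set φ : ℝ → ℝ := fun u => f (x + u • v) - u * ⟪gradient f x, v⟫ - u ^ 2 * (L / 2 * ‖v‖ ^ 2)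
    with hφ
  have hder : ∀ u : ℝ, HasDerivAt φ
      (⟪gradient f (x + u • v), v⟫ - ⟪gradient f x, v⟫ - u * (L * ‖v‖ ^ 2)) u := by
    intro u
    have hcurve : HasDerivAt (fun u : ℝ => x + u • v) v u := by
      simpa using ((hasDerivAt_id u).smul_const v).const_add x
    have h1 : HasDerivAt (fun u : ℝ => f (x + u • v)) (fderiv ℝ f (x + u • v) v) u :=
      (hf (x + u • v)).hasFDerivAt.comp_hasDerivAt u hcurve
    rw [← grad_apply] at h1
    have h2 := ((h1.sub ((hasDerivAt_id u).mul_const ⟪gradient f x, v⟫)).sub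
      (((hasDerivAt_pow 2 u)).mul_const (L / 2 * ‖v‖ ^ 2)))
    refine h2.congr_deriv ?_
    norm_num
    ring
  have hanti : AntitoneOn φ (Set.Icc (0:ℝ) 1) := by
    apply antitoneOn_of_deriv_nonpos (convex_Icc 0 1)
    · exact fun u _ => ((hder u).continuousAt).continuousWithinAt
    · exact fun u _ => ((hder u).differentiableAt).differentiableWithinAt
    · intro u hu
      rw [interior_Icc] at hu
      rw [(hder u).deriv]
      have h3 : ⟪gradient f (x + u • v) - gradient f x, v⟫ ≤ L * u * ‖v‖ ^ 2 := by
        calc ⟪gradient f (x + u • v) - gradient f x, v⟫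
            ≤ ‖gradient f (x + u • v) - gradient f x‖ * ‖v‖ := real_inner_le_norm _ _
          _ ≤ L * ‖(x + u • v) - x‖ * ‖v‖ :=
              mul_le_mul_of_nonneg_right (hL _ _) (norm_nonneg _)
          _ = L * u * ‖v‖ ^ 2 := by
              rw [add_sub_cancel_left, norm_smul, Real.norm_eq_abs,
                abs_of_pos hu.1]; ring
      rw [inner_sub_left] at h3
      nlinarith
  have := hanti (Set.left_mem_Icc.2 zero_le_one) (Set.right_mem_Icc.2 zero_le_one) zero_le_one
  simp only [hφ, one_smul, zero_smul, add_zero, one_pow, one_mul, zero_mul,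
    zero_pow, sub_zero] at this
  · linarith

theorem armijo_fulfillment (n : ℕ) (f : EuclideanSpace ℝ (Fin n) → ℝ)
    (hf : Differentiable ℝ f) (L : ℝ)
    (hL : ∀ x y, ‖gradient f x - gradient f y‖ ≤ L * ‖x - y‖)
    (c α κ₁ κ₂ : ℝ) (hc0 : 0 < c) (hc1 : c < 1) (hα : 0 < α)
    (hκ₁ : 0 < κ₁) (hκ₂ : 0 < κ₂)
    (x s g : EuclideanSpace ℝ (Fin n)) (t : ℝ) (ht0 : 0 < t)
    (hacc : ‖gradient f x - g‖ ≤ α * t * ‖g‖)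
    (hlow : κ₂ * ‖g‖ ≤ ‖s‖) (hup : ‖s‖ ≤ κ₁ * ‖g‖)
    (hdesc : -⟪g, s⟫ ≥ (1 / κ₁) * ‖s‖ ^ 2)
    (htsmall : t ≤ 2 * (1 - c) * κ₂ / ((κ₂ * L + 2 * α) * κ₁)) :
    f (x + t • s) ≤ f x + c * t * ⟪s, g⟫ := by
  rcases eq_or_ne g 0 with hg | hg
  · have hs : s = 0 := by
      have : ‖s‖ ≤ 0 := by simpa [hg] using hup
      simpa using le_antisymm this (norm_nonneg s)
    simp [hg, hs]
  · have hgpos : 0 < ‖g‖ := norm_pos_iff.2 hg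
    have hL0 : 0 ≤ L := by
      have h := hL x (x + g)
      have he : ‖x - (x + g)‖ = ‖g‖ := by simp
      rw [he] at h
      nlinarith [norm_nonneg (gradient f x - gradient f (x + g))]
    have hkey := descent_lemma f hf L hL x (t • s)
    rw [inner_smul_right, norm_smul, Real.norm_eq_abs, abs_of_pos ht0] at hkey
    have h1 : ⟪gradient f x - g, s⟫ ≤ α * t * ‖g‖ * ‖s‖ := by
      calc ⟪gradient f x - g, s⟫ ≤ ‖gradient f x - g‖ * ‖s‖ := real_inner_le_norm _ _
        _ ≤ α * t * ‖g‖ * ‖s‖ := mul_le_mul_of_nonneg_right hacc (norm_nonneg _)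
    have h2 : κ₂ * ⟪gradient f x - g, s⟫ ≤ α * t * ‖s‖ ^ 2 := by
      nlinarith [mul_le_mul_of_nonneg_left h1 hκ₂.le,
        mul_nonneg (mul_nonneg (mul_nonneg hα.le ht0.le)
          (sub_nonneg.2 hlow)) (norm_nonneg s)]
    have hA2 : κ₁ * ⟪g, s⟫ ≤ -‖s‖ ^ 2 := by
      have h := mul_le_mul_of_nonneg_left hdesc hκ₁.le
      rw [mul_neg, ← mul_assoc, mul_one_div, div_self hκ₁.ne', one_mul] at h
      linarith
    have hsplit : ⟪gradient f x, s⟫ = ⟪gradient f x - g, s⟫ + ⟪g, s⟫ := by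
      rw [← inner_add_left, sub_add_cancel]
    have hcomm : ⟪s, g⟫ = ⟪g, s⟫ := real_inner_comm g s
    have hden : 0 < (κ₂ * L + 2 * α) * κ₁ := by positivity
    have ht' : t * ((κ₂ * L + 2 * α) * κ₁) ≤ 2 * (1 - c) * κ₂ :=
      (le_div_iff₀ hden).mp htsmall
    rw [hsplit] at hkey
    rw [hcomm]
    have hS2 : (0:ℝ) ≤ ‖s‖ ^ 2 := sq_nonneg _
    set I1 := ⟪gradient f x - g, s⟫
    set I2 := ⟪g, s⟫
    have hfinal : 2 * κ₁ * κ₂ * (t * (I1 + I2) + L / 2 * (t * ‖s‖) ^ 2 - c * t * I2) ≤ 0 := by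
      have hint1 := mul_le_mul_of_nonneg_right ht' (mul_nonneg ht0.le hS2)
      have hint2 := mul_le_mul_of_nonneg_left h2 (by positivity : (0:ℝ) ≤ 2 * κ₁ * t)
      have hint3 := mul_le_mul_of_nonneg_left hA2
        (mul_nonneg (mul_nonneg (mul_nonneg two_pos.le hκ₂.le)
          (sub_pos.2 hc1).le) ht0.le)
      nlinarith [hint1, hint2, hint3]
    have hApos : (0:ℝ) < 2 * κ₁ * κ₂ := by positivity
    have hX : t * (I1 + I2) + L / 2 * (t * ‖s‖) ^ 2 - c * t * I2 ≤ 0 :=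
      le_of_mul_le_mul_left (by rw [mul_zero]; exact hfinal) hApos
    linarith
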